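/- For every n ≥ 1 and every real number α with 0 ≤ α < 1/(n+1), the set Layer_{n,α} is homeomorphic to the (n−1)-dimensional sphere S^{n−1}. -/

import Mathlib

open scoped BigOperators

noncomputable section

/-- `Spx k` is the standard simplex on `k` coordinates, i.e. the standard simplex
`Δ_{k-1}` of the paper, as a subspace of `ℝ^k`. -/
abbrev Spx (k : ℕ) : Type := {x : Fin k → ℝ // x ∈ stdSimplex ℝ (Fin k)}

lemma perm_mem {k : ℕ} (ϑ : Equiv.Perm (Fin k)) {x : Fin k → ℝ}
    (hx : x ∈ stdSimplex ℝ (Fin k)) :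
    (fun i => x (ϑ i)) ∈ stdSimplex ℝ (Fin k) :=
  ⟨fun i => hx.1 (ϑ i), (Equiv.sum_comp ϑ x).trans hx.2⟩

/-- membership of `COMFORT (Δ_n)`: a self-homeomorphism of the standard simplex which
(i) respects coordinate permutations and (ii) keeps the order. -/
structure IsComfort {n : ℕ} (F : Spx (n+1) ≃ₜ Spx (n+1)) : Prop where
  perm : ∀ (ϑ : Equiv.Perm (Fin (n+1))) (x : Spx (n+1)),
      ((F ⟨fun i => x.1 (ϑ i), perm_mem ϑ x.2⟩ : Spx (n+1)) : Fin (n+1) → ℝ)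
        = fun i => (F x).1 (ϑ i)
  mono : ∀ (x : Spx (n+1)) (i j : Fin (n+1)), x.1 i ≤ x.1 j → (F x).1 i ≤ (F x).1 j

/-- the `α`-cross `♣_{n,α}` of `Δ_n`. -/
def cross (n : ℕ) (α : ℝ) : Set (Spx (n+1)) := {x | ∃ j, x.1 j = α}

/-- the boundary `BOU_n = ♣_{n,0}` of `Δ_n`. -/
def bou (n : ℕ) : Set (Spx (n+1)) := cross n 0

/-- the barycenter `Center_n` of `Δ_n`. -/
def center (n : ℕ) : Spx (n+1) :=
  ⟨fun _ => 1/((n:ℝ)+1), by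
    constructor
    · intro i
      positivity
    · rw [Finset.sum_const, Finset.card_univ, Fintype.card_fin, nsmul_eq_mul]
      push_cast
      field_simp⟩

/-- the minimal coordinate of a point of `Δ_n`. -/
def minCoord {n : ℕ} (x : Spx (n+1)) : ℝ :=
  Finset.univ.inf' Finset.univ_nonempty x.1

/-- the `α`-layer `Layer_{n,α}` of `Δ_n`. -/
def layer (n : ℕ) (α : ℝ) : Set (Spx (n+1)) := {x | minCoord x = α}

/-- `Sponge (Δ_n)`: the points of `Δ_n` with pairwise distinct coordinates. -/
def sponge (n : ℕ) : Set (Spx (n+1)) := {x | ∀ i j, x.1 i = x.1 j → i = j}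


def Sset (n : ℕ) (α : ℝ) : Set (EuclideanSpace ℝ (Fin n)) :=
  {y | (∀ i, α ≤ y i) ∧ ∑ i, y i ≤ 1 - α}

def Uset (n : ℕ) (α : ℝ) : Set (EuclideanSpace ℝ (Fin n)) :=
  {y | (∀ i, α < y i) ∧ ∑ i, y i < 1 - α}

lemma cont_eval {n : ℕ} (i : Fin n) : Continuous fun y : EuclideanSpace ℝ (Fin n) => y i :=
  (EuclideanSpace.proj i).continuous

lemma cont_sum {n : ℕ} : Continuous fun y : EuclideanSpace ℝ (Fin n) => ∑ i, y i :=
  continuous_finset_sum _ fun i _ => cont_eval i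

lemma isClosed_Sset (n : ℕ) (α : ℝ) : IsClosed (Sset n α) := by
  have : Sset n α = (⋂ i, {y : EuclideanSpace ℝ (Fin n) | α ≤ y i}) ∩
      {y | ∑ i, y i ≤ 1 - α} := by
    ext y; simp [Sset, Set.mem_iInter]
  rw [this]
  exact (isClosed_iInter fun i => isClosed_le continuous_const (cont_eval i)).inter
    (isClosed_le cont_sum continuous_const)

lemma isOpen_Uset (n : ℕ) (α : ℝ) : IsOpen (Uset n α) := by
  have : Uset n α = (⋂ i, {y : EuclideanSpace ℝ (Fin n) | α < y i}) ∩
      {y | ∑ i, y i < 1 - α} := by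
    ext y; simp [Uset, Set.mem_iInter]
  rw [this]
  exact ((isOpen_iInter_of_finite fun i => isOpen_lt continuous_const (cont_eval i))).inter
    (isOpen_lt cont_sum continuous_const)

lemma perturb_mem {n : ℕ} {y : EuclideanSpace ℝ (Fin n)} (i : Fin n) (t : ℝ) :
    dist (y + EuclideanSpace.single i t) y = |t| := by
  simp [dist_eq_norm, EuclideanSpace.norm_single]

lemma sum_perturb {n : ℕ} (y : EuclideanSpace ℝ (Fin n)) (i : Fin n) (t : ℝ) :
    ∑ j, (y + EuclideanSpace.single i t) j = (∑ j, y j) + t := by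
  simp [EuclideanSpace.single_apply, Finset.sum_add_distrib]

lemma convex_Sset (n : ℕ) (α : ℝ) : Convex ℝ (Sset n α) := by
  intro x hx y hy a b ha hb hab
  constructor
  · intro i
    have : (a • x + b • y) i = a * x i + b * y i := by
      simp [PiLp.add_apply, PiLp.smul_apply, smul_eq_mul]
    rw [this]
    calc α = a * α + b * α := by rw [← add_mul, hab, one_mul]
    _ ≤ a * x i + b * y i := by
        gcongr
        exacts [hx.1 i, hy.1 i]
  · have : ∑ i, (a • x + b • y) i = a * (∑ i, x i) + b * (∑ i, y i) := by
      simp [PiLp.add_apply, PiLp.smul_apply, smul_eq_mul, Finset.sum_add_distrib,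
        Finset.mul_sum]
    rw [this]
    calc a * (∑ i, x i) + b * (∑ i, y i) ≤ a * (1 - α) + b * (1 - α) := by
          gcongr
          exacts [hx.2, hy.2]
    _ = 1 - α := by rw [← add_mul, hab, one_mul]

lemma bounded_Sset (n : ℕ) {α : ℝ} (hα0 : 0 ≤ α) : Bornology.IsBounded (Sset n α) := by
  refine (Metric.isBounded_closedBall (x := (0 : EuclideanSpace ℝ (Fin n)))
    (r := Real.sqrt n)).subset ?_
  intro y hy
  have h1 : ∀ i, |y i| ≤ 1 := by
    intro i
    have h0 : 0 ≤ y i := le_trans hα0 (hy.1 i)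
    have : y i ≤ ∑ j, y j :=
      Finset.single_le_sum (fun j _ => le_trans hα0 (hy.1 j)) (Finset.mem_univ i)
    rw [abs_of_nonneg h0]
    linarith [hy.2]
  rw [Metric.mem_closedBall, dist_zero_right, EuclideanSpace.norm_eq]
  refine Real.sqrt_le_sqrt ?_
  calc ∑ i, ‖y i‖ ^ 2 ≤ ∑ _i : Fin n, (1 : ℝ) := by
        refine Finset.sum_le_sum fun i _ => ?_
        have := h1 i
        rw [Real.norm_eq_abs]
        nlinarith [abs_nonneg (y i)]
  _ = n := by simp

lemma interior_Sset (n : ℕ) (hn : 1 ≤ n) (α : ℝ) : interior (Sset n α) = Uset n α := by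
  apply Set.Subset.antisymm
  · intro y hy
    obtain ⟨ε, hε, hball⟩ := Metric.isOpen_iff.mp isOpen_interior y hy
    have hsub : Metric.ball y ε ⊆ Sset n α := hball.trans interior_subset
    have hyS : y ∈ Sset n α := interior_subset hy
    constructor
    · intro i
      have hmem : y + EuclideanSpace.single i (-(ε/2)) ∈ Sset n α := by
        apply hsub
        rw [Metric.mem_ball, perturb_mem, abs_neg,
          abs_of_pos (show (0:ℝ) < ε/2 by linarith)]
        linarith
      have := hmem.1 i
      simp [EuclideanSpace.single_apply] at this
      linarith
    · set i0 : Fin n := ⟨0, hn⟩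
      have hmem : y + EuclideanSpace.single i0 (ε/2) ∈ Sset n α := by
        apply hsub
        rw [Metric.mem_ball, perturb_mem, abs_of_pos (show (0:ℝ) < ε/2 by linarith)]
        linarith
      have := hmem.2
      rw [sum_perturb] at this
      linarith
  · rw [← (isOpen_Uset n α).interior_eq]
    apply interior_mono
    intro y hy
    exact ⟨fun i => (hy.1 i).le, hy.2.le⟩

lemma frontier_Sset (n : ℕ) (hn : 1 ≤ n) (α : ℝ) :
    frontier (Sset n α) =
      {y | y ∈ Sset n α ∧ ((∃ i, y i = α) ∨ ∑ i, y i = 1 - α)} := by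
  rw [(isClosed_Sset n α).frontier_eq, interior_Sset n hn α]
  ext y
  simp only [Set.mem_diff, Set.mem_setOf_eq, Uset, Sset, not_and_or, not_forall, not_lt]
  constructor
  · rintro ⟨hS, h | h⟩
    · obtain ⟨i, hi⟩ := h
      exact ⟨hS, Or.inl ⟨i, le_antisymm hi (hS.1 i)⟩⟩
    · exact ⟨hS, Or.inr (le_antisymm hS.2 h)⟩
  · rintro ⟨hS, h | h⟩
    · obtain ⟨i, hi⟩ := h
      exact ⟨hS, Or.inl ⟨i, hi.le⟩⟩
    · exact ⟨hS, Or.inr h.ge⟩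

lemma snoc_mem_simplex {n : ℕ} {α : ℝ} (hα0 : 0 ≤ α) {y : EuclideanSpace ℝ (Fin n)}
    (hy : y ∈ Sset n α) :
    (Fin.snoc y (1 - ∑ i, y i) : Fin (n+1) → ℝ) ∈ stdSimplex ℝ (Fin (n+1)) := by
  have hc : ∀ j, α ≤ (Fin.snoc y (1 - ∑ i, y i) : Fin (n+1) → ℝ) j := by
    intro j
    rcases Fin.eq_castSucc_or_eq_last j with ⟨i, rfl⟩ | rfl
    · rw [Fin.snoc_castSucc]; exact hy.1 i
    · rw [Fin.snoc_last]; linarith [hy.2]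
  constructor
  · intro j; exact hα0.trans (hc j)
  · rw [Fin.sum_univ_castSucc]
    simp only [Fin.snoc_castSucc, Fin.snoc_last]
    ring

lemma snoc_coord_ge {n : ℕ} {α : ℝ} {y : EuclideanSpace ℝ (Fin n)}
    (hy : y ∈ Sset n α) (j : Fin (n+1)) :
    α ≤ (Fin.snoc y (1 - ∑ i, y i) : Fin (n+1) → ℝ) j := by
  rcases Fin.eq_castSucc_or_eq_last j with ⟨i, rfl⟩ | rfl
  · rw [Fin.snoc_castSucc]; exact hy.1 i
  · rw [Fin.snoc_last]; linarith [hy.2]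

lemma mem_layer_snoc {n : ℕ} {α : ℝ} (hα0 : 0 ≤ α) {y : EuclideanSpace ℝ (Fin n)}
    (hy : y ∈ Sset n α) (hb : (∃ i, y i = α) ∨ ∑ i, y i = 1 - α) :
    (⟨Fin.snoc y (1 - ∑ i, y i), snoc_mem_simplex hα0 hy⟩ : Spx (n+1)) ∈ layer n α := by
  show minCoord _ = α
  unfold minCoord
  apply le_antisymm
  · obtain ⟨i, hi⟩ | h := hb
    · refine (Finset.inf'_le _ (Finset.mem_univ i.castSucc)).trans_eq ?_
      show (Fin.snoc y (1 - ∑ i, y i) : Fin (n+1) → ℝ) i.castSucc = α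
      rw [Fin.snoc_castSucc, hi]
    · refine (Finset.inf'_le _ (Finset.mem_univ (Fin.last n))).trans_eq ?_
      show (Fin.snoc y (1 - ∑ i, y i) : Fin (n+1) → ℝ) (Fin.last n) = α
      rw [Fin.snoc_last, h]; ring
  · exact Finset.le_inf' _ _ fun j _ => snoc_coord_ge hy j

lemma restrict_mem_frontier {n : ℕ} (hn : 1 ≤ n) {α : ℝ} {x : Spx (n+1)}
    (hx : x ∈ layer n α) :
    (WithLp.toLp 2 (fun i : Fin n => x.1 i.castSucc) : EuclideanSpace ℝ (Fin n)) ∈ frontier (Sset n α) := by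
  have hx' : Finset.univ.inf' Finset.univ_nonempty x.1 = α := hx
  have hge : ∀ j, α ≤ x.1 j := fun j => by
    rw [← hx']; exact Finset.inf'_le _ (Finset.mem_univ j)
  have hsum : ∑ i : Fin n, x.1 i.castSucc + x.1 (Fin.last n) = 1 :=
    (Fin.sum_univ_castSucc (f := x.1)).symm.trans x.2.2
  rw [frontier_Sset n hn α]
  refine ⟨⟨fun i => hge i.castSucc, ?_⟩, ?_⟩
  · show ∑ i : Fin n, x.1 i.castSucc ≤ 1 - α
    have := hge (Fin.last n); linarith
  · obtain ⟨j, -, hj⟩ := Finset.exists_mem_eq_inf' (Finset.univ_nonempty) x.1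
    have hjα : x.1 j = α := by rw [← hj, hx']
    rcases Fin.eq_castSucc_or_eq_last j with ⟨i, rfl⟩ | rfl
    · exact Or.inl ⟨i, hjα⟩
    · right; show ∑ i : Fin n, x.1 i.castSucc = 1 - α
      rw [hjα] at hsum; linarith

theorem layer_homeomorphic_sphere (n : ℕ) (hn : 1 ≤ n) (α : ℝ)
    (hα0 : 0 ≤ α) (hα1 : α < 1/((n:ℝ)+1)) :
    Nonempty (↥(layer n α) ≃ₜ ↥(Metric.sphere (0 : EuclideanSpace ℝ (Fin n)) 1)) := by
  have hchar : ∀ y : EuclideanSpace ℝ (Fin n),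
      y ∈ frontier (Sset n α) ↔
        (y ∈ Sset n α ∧ ((∃ i, y i = α) ∨ ∑ i, y i = 1 - α)) := by
    intro y; rw [frontier_Sset n hn α]; exact Iff.rfl
  have hne : (interior (Sset n α)).Nonempty := by
    rw [interior_Sset n hn α]
    have hpos : (0:ℝ) < (n:ℝ) + 1 := by positivity
    refine ⟨(WithLp.toLp 2 (fun _ => 1/((n:ℝ)+1)) : EuclideanSpace ℝ (Fin n)), fun i => hα1, ?_⟩
    show ∑ _i : Fin n, (1/((n:ℝ)+1)) < 1 - α
    have : ∑ _i : Fin n, (1/((n:ℝ)+1)) = (n:ℝ)/((n:ℝ)+1) := by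
      rw [Finset.sum_const, Finset.card_univ, Fintype.card_fin, nsmul_eq_mul]
      ring
    rw [this]
    have h2 : (n:ℝ)/((n:ℝ)+1) = 1 - 1/((n:ℝ)+1) := by field_simp; ring
    rw [h2]
    linarith
  obtain ⟨h, -, -, hfr⟩ := exists_homeomorph_image_interior_closure_frontier_eq_unitBall
    (convex_Sset n α) hne (bounded_Sset n hα0)
  have hcS : IsCompact (Sset n α) :=
    Metric.isCompact_of_isClosed_isBounded (isClosed_Sset n α) (bounded_Sset n hα0)
  have hcf : IsCompact (frontier (Sset n α)) :=
    hcS.of_isClosed_subset isClosed_frontier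
      ((isClosed_Sset n α).frontier_eq ▸ Set.diff_subset)
  haveI : CompactSpace ↥(frontier (Sset n α)) := isCompact_iff_compactSpace.mp hcf
  let F : ↥(frontier (Sset n α)) ≃ ↥(layer n α) :=
    { toFun := fun y =>
        ⟨⟨Fin.snoc y.1 (1 - ∑ i, y.1 i), snoc_mem_simplex hα0 ((hchar y.1).mp y.2).1⟩,
          mem_layer_snoc hα0 ((hchar y.1).mp y.2).1 ((hchar y.1).mp y.2).2⟩
      invFun := fun x =>
        ⟨(WithLp.toLp 2 (fun i : Fin n => x.1.1 i.castSucc) : EuclideanSpace ℝ (Fin n)),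
          restrict_mem_frontier hn x.2⟩
      left_inv := fun y => by
        apply Subtype.ext
        ext i
        show (Fin.snoc (y.1 : Fin n → ℝ) (1 - ∑ i, y.1 i) : Fin (n+1) → ℝ) i.castSucc = y.1 i
        rw [Fin.snoc_castSucc]
      right_inv := fun x => by
        apply Subtype.ext
        apply Subtype.ext
        funext j
        show (Fin.snoc (fun i : Fin n => x.1.1 i.castSucc)
            (1 - ∑ i : Fin n, x.1.1 i.castSucc) : Fin (n+1) → ℝ) j = x.1.1 j
        rcases Fin.eq_castSucc_or_eq_last j with ⟨i, rfl⟩ | rfl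
        · rw [Fin.snoc_castSucc]
        · rw [Fin.snoc_last]
          have hsum : ∑ i : Fin n, x.1.1 i.castSucc + x.1.1 (Fin.last n) = 1 :=
            (Fin.sum_univ_castSucc (f := x.1.1)).symm.trans x.1.2.2
          linarith }
  have hcont : Continuous F := by
    apply Continuous.subtype_mk
    apply Continuous.subtype_mk
    refine continuous_pi fun j => ?_
    rcases Fin.eq_castSucc_or_eq_last j with ⟨i, rfl⟩ | rfl
    · simp only [Fin.snoc_castSucc]
      exact (cont_eval i).comp continuous_subtype_val
    · simp only [Fin.snoc_last]
      exact (continuous_const.sub cont_sum).comp continuous_subtype_val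
  let e1 : ↥(frontier (Sset n α)) ≃ₜ ↥(layer n α) := hcont.homeoOfEquivCompactToT2
  exact ⟨e1.symm.trans ((h.image (frontier (Sset n α))).trans (Homeomorph.setCongr hfr))⟩


end
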